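/- For the basic compactoid submodule B = Σ_i p^{k_i} t^i of K((t)) and the admissible seminorm ‖·‖ attached to the net (−k_{−i})_{i∈Z}, we have for every x ∈ K((t)): ‖x‖ ≤ q^n if and only if |π_x|_B ≤ q^n, where |π_x|_B = sup_{y ∈ B} |π_0(xy)|. -/

import Mathlib

open Filter

variable {K : Type*}

noncomputable def wB (q : ℝ) : WithBot ℤ → ℝ :=
  WithBot.recBotCoe 0 fun k : ℤ => q ^ k

noncomputable def wT (q : ℝ) : WithTop ℤ → ℝ :=
  WithTop.recTopCoe 0 fun k : ℤ => q ^ (-k)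

/-- `a ∈ 𝔭^m` for `m ∈ ℤ ∪ {-∞}`, with `𝔭^{-∞} = K`. -/
def memB [NormedField K] (q : ℝ) (a : K) : WithBot ℤ → Prop :=
  WithBot.recBotCoe True fun k : ℤ => ‖a‖ ≤ q ^ (-k)

/-- `a ∈ 𝔭^m` for `m ∈ ℤ ∪ {∞}`, with `𝔭^{∞} = 0`. -/
def memT [NormedField K] (q : ℝ) (a : K) : WithTop ℤ → Prop :=
  WithTop.recTopCoe (a = 0) fun k : ℤ => ‖a‖ ≤ q ^ (-k)

/-- The set `Λ = Σ_i 𝔭^{n_i} t^i` in `K((t))`. -/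
def latticeSet [NormedField K] (q : ℝ) (n : ℤ → WithBot ℤ) : Set (LaurentSeries K) :=
  {x | ∀ i : ℤ, memB q (x.coeff i) (n i)}

/-- The set `B = Σ_i 𝔭^{k_i} t^i` in `K((t))`. -/
def bddSet [NormedField K] (q : ℝ) (k : ℤ → WithTop ℤ) : Set (LaurentSeries K) :=
  {x | ∀ i : ℤ, memT q (x.coeff i) (k i)}

/-- The admissible seminorm `‖Σ x_i t^i‖ = sup_i |x_i| q^{n_i}` (with `q^{-∞} = 0`). -/
noncomputable def sn [NormedField K] (q : ℝ) (n : ℤ → WithBot ℤ) (x : LaurentSeries K) : ℝ :=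
  ⨆ i : ℤ, ‖x.coeff i‖ * wB q (n i)

/-- Admissibility of the net `(n_i)`: `n_i = -∞` for all sufficiently large `i`. -/
def AdmNet (n : ℤ → WithBot ℤ) : Prop := ∃ i₀ : ℤ, ∀ i ≥ i₀, n i = ⊥

/-- The map `m ↦ -m` from `ℤ ∪ {∞}` to `ℤ ∪ {-∞}`, with `-(∞) = -∞`. -/
def negT : WithTop ℤ → WithBot ℤ :=
  WithTop.recTopCoe ⊥ fun j : ℤ => ((-j : ℤ) : WithBot ℤ)

/-- Nonarchimedean bound for finite sums. -/
lemma nonarch_sum [NormedField K] (hna : IsNonarchimedean fun a : K => ‖a‖)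
    {α : Type*} (s : Finset α) (g : α → K) {C : ℝ} (hC : 0 ≤ C)
    (h : ∀ i ∈ s, ‖g i‖ ≤ C) : ‖∑ i ∈ s, g i‖ ≤ C := by
  induction s using Finset.cons_induction with
  | empty => simpa using hC
  | cons a s ha ih =>
      rw [Finset.sum_cons]
      refine le_trans (hna _ _) (max_le (h a (Finset.mem_cons_self a s)) ?_)
      exact ih fun i hi => h i (Finset.mem_cons_of_mem hi)

/-- The terms of the seminorm sup are bounded above. -/
lemma sn_bddAbove [NormedField K] (q : ℝ) (x : LaurentSeries K) (n : ℤ → WithBot ℤ)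
    (j₀ : ℤ) (hn : ∀ i > j₀, n i = ⊥) :
    BddAbove (Set.range fun i => ‖x.coeff i‖ * wB q (n i)) := by
  apply Set.Finite.bddAbove
  have hsub : (Set.range fun i => ‖x.coeff i‖ * wB q (n i)) ⊆
      insert 0 ((fun i => ‖x.coeff i‖ * wB q (n i)) '' Set.Icc x.order j₀) := by
    rintro _ ⟨i, rfl⟩
    by_cases hi : i ∈ Set.Icc x.order j₀
    · exact Set.mem_insert_iff.2 (Or.inr ⟨i, hi, rfl⟩)
    · left
      show ‖x.coeff i‖ * wB q (n i) = 0
      rw [Set.mem_Icc, not_and_or] at hi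
      rcases hi with h | h
      · rw [HahnSeries.coeff_eq_zero_of_lt_order (not_le.1 h), norm_zero, zero_mul]
      · rw [hn i (not_le.1 h)]
        simp [wB]
  exact Set.Finite.subset (((Set.finite_Icc _ _).image _).insert 0) hsub

/-- for the basic compactoid submodule `B = Σ_i 𝔭^{k_i} t^i` of `K((t))`
and the admissible seminorm `‖·‖` attached to the net `(-k_{-i})_{i ∈ ℤ}`, for every
`x ∈ K((t))` and `n ∈ ℤ`: `‖x‖ ≤ q^n` iff `|π_x|_B = sup_{y ∈ B} |π₀(xy)| ≤ q^n`. -/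
theorem seminorm_iff_dual_seminorm [NontriviallyNormedField K]
    (hna : IsNonarchimedean fun a : K => ‖a‖) (q : ℝ) (hq : 1 < q)
    (hval : ∀ a : K, a ≠ 0 → ∃ m : ℤ, ‖a‖ = q ^ m)
    (hsurj : ∀ m : ℤ, ∃ a : K, ‖a‖ = q ^ m)
    (k : ℤ → WithTop ℤ) (hk : ∃ j₀ : ℤ, ∀ i < j₀, k i = ⊤)
    (x : LaurentSeries K) (n : ℤ) :
    sn q (fun i => negT (k (-i))) x ≤ q ^ n ↔
      ∀ y ∈ bddSet (K := K) q k, ‖(x * y).coeff 0‖ ≤ q ^ n := by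
  have hq0 : (0 : ℝ) < q := lt_trans one_pos hq
  have hqn : (0 : ℝ) < q ^ n := zpow_pos hq0 n
  obtain ⟨j₀, hj₀⟩ := hk
  have hbdd : BddAbove (Set.range fun i => ‖x.coeff i‖ * wB q (negT (k (-i)))) := by
    apply sn_bddAbove q x _ (-j₀)
    intro i hi
    have : k (-i) = ⊤ := hj₀ (-i) (by omega)
    rw [this]; rfl
  constructor
  · intro h y hy
    rw [HahnSeries.coeff_mul]
    refine nonarch_sum hna _ _ hqn.le fun ij hij => ?_
    have hsum : ij.1 + ij.2 = 0 := (Finset.mem_addAntidiagonal.1 hij).2.2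
    have hij2 : ij.2 = -ij.1 := by omega
    have hterm : ‖x.coeff ij.1 * y.coeff ij.2‖ ≤ ‖x.coeff ij.1‖ * wB q (negT (k (-ij.1))) := by
      rw [norm_mul, hij2]
      refine mul_le_mul_of_nonneg_left ?_ (norm_nonneg _)
      have hy1 := hy (-ij.1)
      cases hkk : k (-ij.1) with
      | top =>
          rw [hkk] at hy1
          have : y.coeff (-ij.1) = 0 := hy1
          simp [this, wB, negT, hkk]
      | coe j =>
          rw [hkk] at hy1
          have : ‖y.coeff (-ij.1)‖ ≤ q ^ (-j) := hy1
          simpa [wB, negT, hkk] using this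
    refine le_trans hterm (le_trans ?_ h)
    exact le_ciSup hbdd ij.1
  · intro h
    refine Real.iSup_le (fun i => ?_) hqn.le
    cases hkk : k (-i) with
    | top =>
        simp [wB, negT, hkk, hqn.le]
    | coe j =>
        obtain ⟨a, ha⟩ := hsurj (-j)
        have hy : HahnSeries.single (-i) a ∈ bddSet (K := K) q k := by
          intro m
          by_cases hm : m = -i
          · subst hm
            rw [HahnSeries.coeff_single_same, hkk]
            exact le_of_eq ha
          · rw [HahnSeries.coeff_single_of_ne hm]
            cases hkm : k m with
            | top => rfl
            | coe j' =>
                show ‖(0 : K)‖ ≤ q ^ (-j')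
                rw [norm_zero]
                exact (zpow_pos hq0 (-j')).le
        have := h _ hy
        have hc : (x * HahnSeries.single (-i) a).coeff 0 = x.coeff i * a := by
          have := HahnSeries.coeff_mul_single_add (r := a) (x := x) (a := i) (b := -i)
          simpa using this
        rw [hc, norm_mul, ha] at this
        simpa [wB, negT, hkk] using this
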